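/- Let f : R → S be a ring homomorphism and let M be an S-module; regard M as an R-module by restriction of scalars along f. If the endomorphism ring End_R(M) of M as an R-module is semilocal, then the endomorphism ring End_S(M) of M as an S-module is semilocal. -/

import Mathlib

namespace SemilocalAux


section UnitsLemmas

variable {T : Type*} [Ring T]

/-- If `a*b` and `b*a` are units, then `a` is a unit. -/
lemma isUnit_of_mul_isUnit {a b : T} (h1 : IsUnit (a * b)) (h2 : IsUnit (b * a)) :
    IsUnit a := by
  obtain ⟨u, hu⟩ := h1
  obtain ⟨v, hv⟩ := h2
  have hr : a * (b * ↑u⁻¹) = 1 := by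
    rw [← mul_assoc, ← hu, Units.mul_inv]
  have hl : (↑v⁻¹ * b) * a = 1 := by
    rw [mul_assoc, ← hv, Units.inv_mul]
  have hlr : (↑v⁻¹ * b : T) = b * ↑u⁻¹ := by
    calc (↑v⁻¹ * b : T) = (↑v⁻¹ * b) * (a * (b * ↑u⁻¹)) := by rw [hr, mul_one]
    _ = ((↑v⁻¹ * b) * a) * (b * ↑u⁻¹) := by noncomm_ring
    _ = b * ↑u⁻¹ := by rw [hl, one_mul]
  exact ⟨⟨a, b * ↑u⁻¹, hr, by rw [← hlr]; exact hl⟩, rfl⟩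

/-- Jacobson's lemma direction: `1 - a*b` unit implies `1 - b*a` unit. -/
lemma isUnit_one_sub_comm {a b : T} (h : IsUnit (1 - a * b)) : IsUnit (1 - b * a) := by
  obtain ⟨u, hu⟩ := h
  have hc1 : (↑u⁻¹ : T) * (1 - a * b) = 1 := by rw [← hu, Units.inv_mul]
  have hc2 : (1 - a * b) * (↑u⁻¹ : T) = 1 := by rw [← hu, Units.mul_inv]
  set c : T := ↑u⁻¹ with hc
  refine ⟨⟨1 - b * a, 1 + b * c * a, ?_, ?_⟩, rfl⟩
  · have expand : (1 - b * a) * (1 + b * c * a) = 1 - b * a + b * ((1 - a * b) * c) * a := by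
      noncomm_ring
    rw [expand, hc2]; noncomm_ring
  · have expand : (1 + b * c * a) * (1 - b * a) = 1 - b * a + b * (c * (1 - a * b)) * a := by
      noncomm_ring
    rw [expand, hc1]; noncomm_ring

/-- An idempotent `e` with `1 - e` a unit is zero. -/
lemma idem_eq_zero_of_isUnit_one_sub {e : T} (he : e * e = e) (h : IsUnit (1 - e)) :
    e = 0 := by
  obtain ⟨u, hu⟩ := h
  have h1 : (1 - e) * (↑u⁻¹ : T) = 1 := by rw [← hu, Units.mul_inv]
  have : e * ((1 - e) * (↑u⁻¹ : T)) = e := by rw [h1, mul_one]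
  rw [← mul_assoc, mul_sub, mul_one, he, sub_self, zero_mul] at this
  exact this.symm

end UnitsLemmas

section Jacobson

variable {T : Type*} [Ring T]

/-- Membership in the Jacobson radical via units. -/
lemma mem_jacobson_bot_iff {t : T} :
    t ∈ (TwoSidedIdeal.jacobson (⊥ : TwoSidedIdeal T)) ↔ ∀ y : T, IsUnit (1 + y * t) := by
  rw [TwoSidedIdeal.mem_jacobson_iff]
  constructor
  · intro h y
    obtain ⟨z, hz⟩ := h y
    rw [TwoSidedIdeal.mem_bot] at hz
    have hz1 : z * (1 + y * t) = 1 := by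
      rw [← sub_eq_zero]
      calc z * (1 + y * t) - 1 = z * y * t + z - 1 := by noncomm_ring
      _ = 0 := hz
    obtain ⟨w, hw⟩ := h (-(z * y))
    rw [TwoSidedIdeal.mem_bot] at hw
    have hz' : 1 + -(z * y) * t = z := by
      rw [← sub_eq_zero]
      calc 1 + -(z * y) * t - z = -(z * y * t + z - 1) := by noncomm_ring
      _ = 0 := by rw [hz, neg_zero]
    have hwz : w * z = 1 := by
      rw [← sub_eq_zero]
      calc w * z - 1 = w * (1 + -(z * y) * t) - 1 := by rw [hz']
      _ = w * -(z * y) * t + w - 1 := by noncomm_ring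
      _ = 0 := hw
    have hweq : w = 1 + y * t := by
      calc w = w * (z * (1 + y * t)) := by rw [hz1, mul_one]
      _ = (w * z) * (1 + y * t) := by rw [mul_assoc]
      _ = 1 + y * t := by rw [hwz, one_mul]
    exact ⟨⟨1 + y * t, z, by rw [← hweq]; exact hwz, hz1⟩, rfl⟩
  · intro h y
    obtain ⟨u, hu⟩ := h y
    refine ⟨↑u⁻¹, ?_⟩
    rw [TwoSidedIdeal.mem_bot]
    have h1 : (↑u⁻¹ : T) * (1 + y * t) = 1 := by rw [← hu, Units.inv_mul]
    rw [← sub_eq_zero] at h1 ⊢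
    calc ↑u⁻¹ * y * t + ↑u⁻¹ - 1 - 0 = ↑u⁻¹ * (1 + y * t) - 1 := by noncomm_ring
    _ = 0 := h1

end Jacobson



section Quot

variable {T : Type*} [Ring T]

lemma mk_surjective :
    Function.Surjective (RingCon.mk' (TwoSidedIdeal.jacobson (⊥ : TwoSidedIdeal T)).ringCon) :=
  fun b => Quotient.exists_rep b

lemma mk_eq_iff {x y : T} :
    RingCon.mk' (TwoSidedIdeal.jacobson (⊥ : TwoSidedIdeal T)).ringCon x =
      RingCon.mk' (TwoSidedIdeal.jacobson (⊥ : TwoSidedIdeal T)).ringCon y ↔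
      x - y ∈ (TwoSidedIdeal.jacobson (⊥ : TwoSidedIdeal T)) := by
  rw [show (RingCon.mk' (TwoSidedIdeal.jacobson (⊥ : TwoSidedIdeal T)).ringCon x =
      RingCon.mk' (TwoSidedIdeal.jacobson (⊥ : TwoSidedIdeal T)).ringCon y) ↔
      ((TwoSidedIdeal.jacobson (⊥ : TwoSidedIdeal T)).ringCon x y) from RingCon.eq _]
  exact TwoSidedIdeal.rel_iff _ _ _

/-- Units lift along the quotient by the Jacobson radical. -/
lemma isUnit_of_mk_isUnit {t : T}
    (h : IsUnit (RingCon.mk' (TwoSidedIdeal.jacobson (⊥ : TwoSidedIdeal T)).ringCon t)) :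
    IsUnit t := by
  set mk := RingCon.mk' (TwoSidedIdeal.jacobson (⊥ : TwoSidedIdeal T)).ringCon with hmk
  obtain ⟨u, hu⟩ := h
  obtain ⟨s, hs⟩ := mk_surjective ((↑u⁻¹ : _) : (TwoSidedIdeal.jacobson (⊥ : TwoSidedIdeal T)).ringCon.Quotient)
  have h1 : mk (t * s) = mk 1 := by
    rw [map_mul, ← hu, hs, map_one, Units.mul_inv]
  have h2 : mk (s * t) = mk 1 := by
    rw [map_mul, ← hu, hs, map_one, Units.inv_mul]
  rw [hmk, mk_eq_iff] at h1 h2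
  have hu1 : IsUnit (t * s) := by
    have := (mem_jacobson_bot_iff.1 h1) 1
    rw [one_mul] at this
    have e : 1 + (t * s - 1) = t * s := by noncomm_ring
    rwa [e] at this
  have hu2 : IsUnit (s * t) := by
    have := (mem_jacobson_bot_iff.1 h2) 1
    rw [one_mul] at this
    have e : 1 + (s * t - 1) = s * t := by noncomm_ring
    rwa [e] at this
  exact isUnit_of_mul_isUnit hu1 hu2

/-- The quotient by the Jacobson radical has zero radical (unit-criterion form). -/
lemma eq_zero_of_forall_isUnit_one_sub
    {b : (TwoSidedIdeal.jacobson (⊥ : TwoSidedIdeal T)).ringCon.Quotient}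
    (h : ∀ x, IsUnit (1 - x * b)) : b = 0 := by
  obtain ⟨t, rfl⟩ := mk_surjective b
  set mk := RingCon.mk' (TwoSidedIdeal.jacobson (⊥ : TwoSidedIdeal T)).ringCon with hmk
  have ht : t ∈ (TwoSidedIdeal.jacobson (⊥ : TwoSidedIdeal T)) := by
    rw [mem_jacobson_bot_iff]
    intro y
    have := h (-(mk y))
    have e : 1 - (-(mk y)) * mk t = mk (1 + y * t) := by
      rw [map_add, map_one, map_mul]; noncomm_ring
    rw [e] at this
    exact isUnit_of_mk_isUnit this
  have : mk t = mk 0 := by rw [hmk, mk_eq_iff, sub_zero]; exact ht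
  rw [this, map_zero]


end Quot


variable {A : Type*} [Ring A] [IsSemisimpleRing A]

/-- In a semisimple ring, a left-invertible element is a unit. -/
lemma isUnit_of_leftInverse {a c : A} (h : c * a = 1) : IsUnit a := by
  let f : A →ₗ[A] A := LinearMap.toSpanSingleton A A a
  have hf : ∀ z : A, f z = z * a := fun z => rfl
  have hsurj : Function.Surjective f := by
    intro w
    exact ⟨w * c, by rw [hf, mul_assoc, h, mul_one]⟩
  have hinj : Function.Injective f :=
    IsNoetherian.injective_of_surjective_endomorphism f hsurj
  have : f (a * c) = f 1 := by
    rw [hf, hf, one_mul, mul_assoc, h, mul_one]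
  have hac : a * c = 1 := hinj this
  exact ⟨⟨a, c, hac, h⟩, rfl⟩

/-- Key dichotomy (Camps–Dicks style): either `1 - a*x` is a unit, or
`a - a*x*a` generates a strictly smaller left ideal than `a`. -/
lemma isUnit_or_span_lt (a x : A) :
    IsUnit (1 - a * x) ∨
      Submodule.span A {a - a * x * a} < Submodule.span A {a} := by
  have hmem : a - a * x * a ∈ Submodule.span A {a} := by
    rw [Submodule.mem_span_singleton]
    exact ⟨1 - a * x, by rw [smul_eq_mul]; noncomm_ring⟩
  have hle : Submodule.span A {a - a * x * a} ≤ Submodule.span A {a} := by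
    rw [Submodule.span_le, Set.singleton_subset_iff]; exact hmem
  by_cases hlt : Submodule.span A {a - a * x * a} < Submodule.span A {a}
  · exact Or.inr hlt
  · left
    have heq : Submodule.span A {a - a * x * a} = Submodule.span A {a} :=
      (hle.lt_or_eq).resolve_left hlt
    have ha : a ∈ Submodule.span A {a - a * x * a} := by
      rw [heq]; exact Submodule.mem_span_singleton_self a
    rw [Submodule.mem_span_singleton] at ha
    obtain ⟨u, hu⟩ := ha
    rw [smul_eq_mul] at hu
    -- hu : u * (a - a*x*a) = a
    have h2 : u * ((1 - a * x) * a) = a := by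
      calc u * ((1 - a * x) * a) = u * (a - a * x * a) := by noncomm_ring
      _ = a := hu
    have key : (1 + u - u * (1 - a * x)) * (1 - a * x) = 1 := by
      have expand : (1 + u - u * (1 - a * x)) * (1 - a * x)
          = (1 - a * x) + (u * ((1 - a * x) * a)) * x := by noncomm_ring
      rw [expand, h2]; noncomm_ring
    exact isUnit_of_leftInverse key


section Core

variable {T A : Type*} [Ring T] [Ring A] [IsSemisimpleRing A]

/-- The core theorem: if there is a local ring homomorphism from `T` to a semisimple
ring `A`, then `T` is semilocal, i.e. `T / J(T)` is semisimple. -/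
theorem isSemisimpleRing_quotient_of_local (ψ : T →+* A)
    (hloc : ∀ t : T, IsUnit (ψ t) → IsUnit t) :
    IsSemisimpleRing (TwoSidedIdeal.jacobson (⊥ : TwoSidedIdeal T)).ringCon.Quotient := by
  set mk : T →+* (TwoSidedIdeal.jacobson (⊥ : TwoSidedIdeal T)).ringCon.Quotient :=
    RingCon.mk' (TwoSidedIdeal.jacobson (⊥ : TwoSidedIdeal T)).ringCon with hmkdef
  have wf : WellFounded ((· < ·) : Submodule A A → Submodule A A → Prop) := IsWellFounded.wf
  -- Step 1: the quotient is von Neumann regular.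
  have vnrT : ∀ (W : Submodule A A), ∀ t : T, Submodule.span A {ψ t} = W →
      ∃ z, mk t * z * mk t = mk t := by
    intro W
    refine WellFounded.induction wf
      (C := fun W => ∀ t : T, Submodule.span A {ψ t} = W → ∃ z, mk t * z * mk t = mk t) W ?_
    intro V ih t hVt
    by_cases hall : ∀ x, IsUnit (1 - x * mk t)
    · refine ⟨0, ?_⟩
      have h0 : mk t = 0 := eq_zero_of_forall_isUnit_one_sub hall
      rw [h0]; simp
    · push_neg at hall
      obtain ⟨x, hx⟩ := hall
      obtain ⟨y, rfl⟩ := mk_surjective x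
      rcases isUnit_or_span_lt (ψ t) (ψ y) with hu | hlt
      · exfalso
        have h0 : IsUnit (ψ (1 - t * y)) := by rw [map_sub, map_one, map_mul]; exact hu
        have h1 : IsUnit (1 - t * y) := hloc _ h0
        have h2 : IsUnit (1 - mk t * mk y) := by
          have := h1.map mk
          rwa [map_sub, map_one, map_mul] at this
        exact hx (isUnit_one_sub_comm h2)
      · have himg : ψ (t - t * y * t) = ψ t - ψ t * ψ y * ψ t := by
          rw [map_sub, map_mul, map_mul]
        have hspan : Submodule.span A {ψ (t - t * y * t)} < V := by
          rw [himg]; exact hVt ▸ hlt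
        obtain ⟨z', hz'⟩ := ih _ hspan (t - t * y * t) rfl
        have hmkt' : mk (t - t * y * t) = mk t - mk t * mk y * mk t := by
          rw [map_sub, map_mul, map_mul]
        rw [hmkt'] at hz'
        refine ⟨mk y + (1 - mk y * mk t) * z' - ((1 - mk y * mk t) * z') * mk t * mk y, ?_⟩
        have expand : mk t * (mk y + (1 - mk y * mk t) * z'
              - ((1 - mk y * mk t) * z') * mk t * mk y) * mk t
            = mk t * mk y * mk t
              + (mk t - mk t * mk y * mk t) * z' * (mk t - mk t * mk y * mk t) := by
          noncomm_ring
        rw [expand, hz']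
        noncomm_ring
  have vnrB : ∀ b : (TwoSidedIdeal.jacobson (⊥ : TwoSidedIdeal T)).ringCon.Quotient,
      ∃ z, b * z * b = b := by
    intro b
    obtain ⟨t, rfl⟩ := mk_surjective b
    exact vnrT _ t rfl
  -- Step 2: no infinite strictly increasing chain of idempotents.
  have no_chain : ∀ (E : ℕ → (TwoSidedIdeal.jacobson (⊥ : TwoSidedIdeal T)).ringCon.Quotient),
      E 0 = 0 → (∀ n, E n * E n = E n) → (∀ n, E (n+1) * E n = E n) →
      (∀ n, E n * E (n+1) = E n) → (∀ n, E n ≠ E (n+1)) → False := by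
    intro E hE0 hidem hr1 hr2 hne
    have hsec : ∀ b, ∃ t : T, mk t = b := mk_surjective
    choose sec hsec using hsec
    let tseq : ℕ → T := fun n => Nat.rec 1 (fun m tm => tm - tm * sec (E (m+1) - E m) * tm) n
    have htseqS : ∀ n, tseq (n+1) = tseq n - tseq n * sec (E (n+1) - E n) * tseq n := fun n => rfl
    have hmk : ∀ n, mk (tseq n) = 1 - E n := by
      intro n
      induction n with
      | zero => rw [show tseq 0 = 1 from rfl, map_one, hE0, sub_zero]
      | succ m ihm =>
        rw [htseqS, map_sub, map_mul, map_mul, hsec, ihm]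
        have h1 : E m * (E (m+1) - E m) = 0 := by rw [mul_sub, hr2, hidem, sub_self]
        have h2 : (E (m+1) - E m) * E m = 0 := by rw [sub_mul, hr1, hidem, sub_self]
        calc (1 - E m) - (1 - E m) * (E (m+1) - E m) * (1 - E m)
            = (1 - E m) - ((E (m+1) - E m) - E m * (E (m+1) - E m)) * (1 - E m) := by noncomm_ring
          _ = (1 - E m) - (E (m+1) - E m) * (1 - E m) := by rw [h1, sub_zero]
          _ = (1 - E m) - ((E (m+1) - E m) - (E (m+1) - E m) * E m) := by noncomm_ring
          _ = (1 - E m) - (E (m+1) - E m) := by rw [h2, sub_zero]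
          _ = 1 - E (m+1) := by noncomm_ring
    have hchain : ∀ n, Submodule.span A {ψ (tseq (n+1))} < Submodule.span A {ψ (tseq n)} := by
      intro n
      rcases isUnit_or_span_lt (ψ (tseq n)) (ψ (sec (E (n+1) - E n))) with hu | hlt
      · exfalso
        have h0 : IsUnit (ψ (1 - tseq n * sec (E (n+1) - E n))) := by
          rw [map_sub, map_one, map_mul]; exact hu
        have h1 := hloc _ h0
        have h2 : IsUnit (1 - mk (tseq n) * (E (n+1) - E n)) := by
          have := h1.map mk
          rwa [map_sub, map_one, map_mul, hsec] at this
        rw [hmk] at h2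
        have h4 : E n * (E (n+1) - E n) = 0 := by rw [mul_sub, hr2, hidem, sub_self]
        have h3 : (1 - E n) * (E (n+1) - E n) = E (n+1) - E n := by
          calc (1 - E n) * (E (n+1) - E n)
              = (E (n+1) - E n) - E n * (E (n+1) - E n) := by noncomm_ring
            _ = E (n+1) - E n := by rw [h4, sub_zero]
        rw [h3] at h2
        have hidem' : (E (n+1) - E n) * (E (n+1) - E n) = E (n+1) - E n := by
          rw [sub_mul, mul_sub, mul_sub, hidem, hidem, hr1, hr2]
          noncomm_ring
        have h5 := idem_eq_zero_of_isUnit_one_sub hidem' h2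
        exact hne n (sub_eq_zero.mp h5).symm
      · rw [htseqS]
        have himg : ψ (tseq n - tseq n * sec (E (n+1) - E n) * tseq n)
            = ψ (tseq n) - ψ (tseq n) * ψ (sec (E (n+1) - E n)) * ψ (tseq n) := by
          rw [map_sub, map_mul, map_mul]
        rw [himg]; exact hlt
    obtain ⟨Wm, ⟨n, hn⟩, hmin⟩ :=
      wf.has_min (Set.range fun n => Submodule.span A {ψ (tseq n)}) ⟨_, ⟨0, rfl⟩⟩
    exact hmin _ ⟨n+1, rfl⟩ (hn ▸ hchain n)
  -- Step 3: every left ideal of the quotient is generated by an idempotent.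
  have hgen : ∀ I : Submodule (TwoSidedIdeal.jacobson (⊥ : TwoSidedIdeal T)).ringCon.Quotient
      (TwoSidedIdeal.jacobson (⊥ : TwoSidedIdeal T)).ringCon.Quotient,
      ∃ g, g * g = g ∧ Submodule.span _ {g} = I := by
    intro I
    by_contra hno
    push_neg at hno
    have step_ex : ∀ e, e * e = e → Submodule.span _ {e} ≤ I →
        ∃ g, (g * g = g ∧ Submodule.span _ {g} ≤ I) ∧ g * e = e ∧ e * g = e ∧ e ≠ g := by
      intro e he hle
      have hlt : Submodule.span _ {e} < I := hle.lt_of_ne (hno e he)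
      obtain ⟨b, hbI, hbE⟩ := SetLike.exists_of_lt hlt
      obtain ⟨z, hz⟩ := vnrB (b - b * e)
      set c := b - b * e with hcdef
      have hce : c * e = 0 := by
        rw [hcdef, sub_mul, mul_assoc, he, sub_self]
      have hh0e : (z * c) * e = 0 := by rw [mul_assoc, hce, mul_zero]
      set k := z * c - e * (z * c) with hkdef
      have hke : k * e = 0 := by
        rw [hkdef, sub_mul, hh0e, mul_assoc, hh0e, mul_zero, sub_self]
      have hek : e * k = 0 := by
        rw [hkdef, mul_sub, ← mul_assoc e e (z * c), he, sub_self]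
      have hch : c * (z * c) = c := by rw [← mul_assoc]; exact hz
      have hck : c * k = c := by
        rw [hkdef, mul_sub, hch, ← mul_assoc, hce, zero_mul, sub_zero]
      have hh0k : (z * c) * k = z * c := by
        rw [hkdef, mul_sub, ← mul_assoc (z*c) e (z*c), hh0e, zero_mul, sub_zero]
        rw [mul_assoc, hch]
      have hkk : k * k = k := by
        rw [hkdef, sub_mul, hh0k]
        rw [mul_assoc, hh0k]
      set g := e + k with hgdef
      have hge : g * e = e := by rw [hgdef, add_mul, he, hke, add_zero]
      have heg : e * g = e := by rw [hgdef, mul_add, he, hek, add_zero]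
      have hkg : k * g = k := by rw [hgdef, mul_add, hke, hkk, zero_add]
      have hgg : g * g = g := by
        rw [hgdef, add_mul, ← hgdef, heg, hkg, hgdef]
      -- membership in I
      have hcI : c ∈ I := by
        rw [hcdef]
        exact sub_mem hbI (by simpa [smul_eq_mul] using I.smul_mem b (hle (Submodule.mem_span_singleton_self e)))
      have heI : e ∈ I := hle (Submodule.mem_span_singleton_self e)
      have hkI : k ∈ I := by
        rw [hkdef]
        exact sub_mem (by simpa [smul_eq_mul] using I.smul_mem z hcI)
          (by simpa [smul_eq_mul] using I.smul_mem e (by simpa [smul_eq_mul] using I.smul_mem z hcI))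
      have hgI : g ∈ I := by rw [hgdef]; exact add_mem heI hkI
      refine ⟨g, ⟨hgg, ?_⟩, hge, heg, ?_⟩
      · rw [Submodule.span_le, Set.singleton_subset_iff]; exact hgI
      · intro hEg
        apply hbE
        have h6 : c * g = c := by
          calc c * g = (c * k) * g := by rw [hck]
          _ = c * (k * g) := by rw [mul_assoc]
          _ = c * k := by rw [hkg]
          _ = c := hck
        have h7 : b = c + b * e := by rw [hcdef]; noncomm_ring
        have hbg : b * g = b := by
          calc b * g = (c + b * e) * g := by rw [← h7]
          _ = c * g + b * (e * g) := by noncomm_ring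
          _ = c + b * e := by rw [h6, heg]
          _ = b := h7.symm
        rw [hEg]
        exact Submodule.mem_span_singleton.2 ⟨b, by rw [smul_eq_mul]; exact hbg⟩
    have base : ((0 : (TwoSidedIdeal.jacobson (⊥ : TwoSidedIdeal T)).ringCon.Quotient) * 0 = 0 ∧
        Submodule.span _ {(0 : (TwoSidedIdeal.jacobson (⊥ : TwoSidedIdeal T)).ringCon.Quotient)} ≤ I) :=
      ⟨by rw [mul_zero], by rw [Submodule.span_zero_singleton]; exact bot_le⟩
    have step_ex' : ∀ p : {p : (TwoSidedIdeal.jacobson (⊥ : TwoSidedIdeal T)).ringCon.Quotient //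
        p * p = p ∧ Submodule.span _ {p} ≤ I},
        ∃ q : {p : (TwoSidedIdeal.jacobson (⊥ : TwoSidedIdeal T)).ringCon.Quotient //
          p * p = p ∧ Submodule.span _ {p} ≤ I},
        q.1 * p.1 = p.1 ∧ p.1 * q.1 = p.1 ∧ p.1 ≠ q.1 := by
      rintro ⟨e, he, hle⟩
      obtain ⟨g, hg, h1, h2, h3⟩ := step_ex e he hle
      exact ⟨⟨g, hg.1, hg.2⟩, h1, h2, h3⟩
    choose F hF1 hF2 hF3 using step_ex'
    let seq : ℕ → {p : (TwoSidedIdeal.jacobson (⊥ : TwoSidedIdeal T)).ringCon.Quotient //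
        p * p = p ∧ Submodule.span _ {p} ≤ I} := fun n => Nat.rec ⟨0, base⟩ (fun _ p => F p) n
    have hseqS : ∀ n, seq (n+1) = F (seq n) := fun _ => rfl
    refine no_chain (fun n => (seq n).1) rfl (fun n => (seq n).2.1)
      (fun n => ?_) (fun n => ?_) (fun n => ?_)
    · show (seq (n+1)).1 * (seq n).1 = (seq n).1
      rw [hseqS]; exact hF1 (seq n)
    · show (seq n).1 * (seq (n+1)).1 = (seq n).1
      rw [hseqS]; exact hF2 (seq n)
    · show (seq n).1 ≠ (seq (n+1)).1
      rw [hseqS]; exact hF3 (seq n)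
  -- Step 4: conclude that the lattice of left ideals is complemented.
  refine { exists_isCompl := fun I => ?_ }
  obtain ⟨g, hg, hspan⟩ := hgen I
  refine ⟨Submodule.span _ {1 - g}, ?_⟩
  rw [← hspan]
  constructor
  · rw [Submodule.disjoint_def]
    intro x hx1 hx2
    rw [Submodule.mem_span_singleton] at hx1 hx2
    obtain ⟨u, hu⟩ := hx1
    obtain ⟨v, hv⟩ := hx2
    rw [smul_eq_mul] at hu hv
    have e1 : x * g = x := by rw [← hu, mul_assoc, hg]
    have e2 : x * g = 0 := by
      rw [← hv, mul_assoc, sub_mul, one_mul, hg, sub_self, mul_zero]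
    rw [← e1, e2]
  · rw [codisjoint_iff_le_sup]
    rintro z -
    refine Submodule.mem_sup.2 ⟨z * g, ?_, z * (1 - g), ?_, by noncomm_ring⟩
    · exact Submodule.mem_span_singleton.2 ⟨z, by rw [smul_eq_mul]⟩
    · exact Submodule.mem_span_singleton.2 ⟨z, by rw [smul_eq_mul]⟩

end Core

section EndMaps

variable {R S M : Type*} [Ring R] [Ring S] [AddCommGroup M] [Module S M] [Module R M]

/-- An `S`-linear endomorphism is `R`-linear when the `R`-action factors through `f`. -/
def restrictEnd (f : R →+* S) (hres : ∀ (r : R) (m : M), r • m = f r • m) :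
    Module.End S M →+* Module.End R M where
  toFun g :=
    { toFun := g
      map_add' := g.map_add
      map_smul' := fun r m => by
        simp only [RingHom.id_apply]
        rw [hres, g.map_smul, hres] }
  map_one' := rfl
  map_mul' _ _ := rfl
  map_zero' := rfl
  map_add' _ _ := rfl

lemma restrictEnd_local (f : R →+* S) (hres : ∀ (r : R) (m : M), r • m = f r • m)
    (g : Module.End S M) (h : IsUnit (restrictEnd f hres g)) : IsUnit g := by
  obtain ⟨u, hu⟩ := h
  have h1 : ∀ m : M, g ((↑u⁻¹ : Module.End R M) m) = m := by
    intro m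
    have : ((restrictEnd f hres g) * (↑u⁻¹ : Module.End R M)) m = m := by
      rw [← hu, Units.mul_inv]; rfl
    exact this
  have h2 : ∀ m : M, (↑u⁻¹ : Module.End R M) (g m) = m := by
    intro m
    have : ((↑u⁻¹ : Module.End R M) * (restrictEnd f hres g)) m = m := by
      rw [← hu, Units.inv_mul]; rfl
    exact this
  have hginj : Function.Injective g := by
    intro a b hab
    have := congrArg (↑u⁻¹ : Module.End R M) hab
    rwa [h2, h2] at this
  refine ⟨⟨g, ?_, ?_, ?_⟩, rfl⟩
  · exact
      { toFun := (↑u⁻¹ : Module.End R M)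
        map_add' := (↑u⁻¹ : Module.End R M).map_add
        map_smul' := fun s m => by
          simp only [RingHom.id_apply]
          apply hginj
          rw [h1, g.map_smul, h1] }
  · apply LinearMap.ext
    intro m
    exact h1 m
  · apply LinearMap.ext
    intro m
    exact h2 m

end EndMaps

end SemilocalAux

/-- A ring is semilocal if its quotient by the Jacobson radical is a semisimple
(artinian) ring. -/
def IsSemilocalRing (R : Type*) [Ring R] : Prop :=
  IsSemisimpleRing (TwoSidedIdeal.jacobson (⊥ : TwoSidedIdeal R)).ringCon.Quotient

/-- Let `f : R → S` be a ring homomorphism and `M` an `S`-module, regarded as an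
`R`-module by restriction of scalars along `f` (i.e. `r • m = f r • m`). If `End_R(M)` is
semilocal, then `End_S(M)` is semilocal. -/
theorem isSemilocalRing_end_of_restrictScalars {R S M : Type*} [Ring R] [Ring S]
    (f : R →+* S) [AddCommGroup M] [Module S M] [Module R M]
    (hres : ∀ (r : R) (m : M), r • m = f r • m)
    (h : IsSemilocalRing (Module.End R M)) :
    IsSemilocalRing (Module.End S M) := by
  haveI hA : IsSemisimpleRing
      (TwoSidedIdeal.jacobson (⊥ : TwoSidedIdeal (Module.End R M))).ringCon.Quotient := h
  exact SemilocalAux.isSemisimpleRing_quotient_of_local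
    ((RingCon.mk' (TwoSidedIdeal.jacobson
        (⊥ : TwoSidedIdeal (Module.End R M))).ringCon).comp
      (SemilocalAux.restrictEnd f hres))
    (fun g hg => SemilocalAux.restrictEnd_local f hres g
      (SemilocalAux.isUnit_of_mk_isUnit hg))
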